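/- Let η = diag(1,−1,…,−1) on ℝ^{1+n} and let v, w be future-directed causal vectors with η(v,w) > 0. Then the symmetric matrix vwᵀ + wvᵀ − η(v,w)·η is positive semidefinite. -/

import Mathlib

/-- The Minkowski inner product of signature `(1,n)` on `ℝ^{1+n}`. -/
noncomputable def mink {n : ℕ} (x y : Fin (n + 1) → ℝ) : ℝ :=
  x 0 * y 0 - ∑ i : Fin n, x i.succ * y i.succ

/-- The matrix `η = diag(1, -1, …, -1)`. -/
noncomputable def minkMatrix (n : ℕ) : Matrix (Fin (n + 1)) (Fin (n + 1)) ℝ :=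
  Matrix.diagonal (fun i => if i = 0 then 1 else -1)


lemma key (A B aa bb c pp s t x0 : ℝ) (hA : 0 < A) (hB : 0 < B)
    (haa : aa ≤ A^2) (hbb : bb ≤ B^2) (h0aa : 0 ≤ aa) (h0bb : 0 ≤ bb) (h0pp : 0 ≤ pp)
    (hs : s^2 ≤ aa*pp) (ht : t^2 ≤ bb*pp) (hcs : c^2 ≤ aa*bb)
    (hgram : aa*t^2 + bb*s^2 - 2*c*s*t + c^2*pp ≤ aa*bb*pp) :
    (A*B - c)*(x0^2 - pp) ≤ 2*(x0*A+s)*(x0*B+t) := by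
  have hBt : t^2 ≤ B^2*pp := le_trans ht (by nlinarith)
  have hAs : s^2 ≤ A^2*pp := le_trans hs (by nlinarith)
  have h1 : aa*(B^2*pp - t^2) ≤ A^2*(B^2*pp - t^2) :=
    mul_le_mul_of_nonneg_right haa (by linarith)
  have h2 : bb*(aa*pp - s^2) ≤ B^2*(aa*pp - s^2) :=
    mul_le_mul_of_nonneg_right hbb (by linarith)
  have hdisc : A^2*t^2 + B^2*s^2 ≤ 2*c*s*t + (A^2*B^2 - c^2)*pp := by nlinarith
  have haabb : aa*bb ≤ A^2*B^2 := by nlinarith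
  have hc2 : 0 ≤ A*B + c := by nlinarith [sq_nonneg (A*B + c), mul_pos hA hB]
  rcases eq_or_lt_of_le hc2 with h | h
  · have hc' : c = -(A*B) := by linarith
    rw [hc'] at hdisc ⊢
    have hc1 : (A*t + B*s)^2 ≤ 0 := by nlinarith
    have hAt : A*t + B*s = 0 := by
      have : (A*t + B*s)^2 = 0 := le_antisymm hc1 (sq_nonneg _)
      exact sq_eq_zero_iff.mp this
    have key3 : A*(2*(x0*A+s)*(x0*B+t)) = 2*B*((A*x0)^2 - s^2) := by
      linear_combination (2*(x0*A+s)) * hAt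
    have hmul : A*((A*B - -(A*B))*(x0^2 - pp)) ≤ A*(2*(x0*A+s)*(x0*B+t)) := by
      rw [key3]
      nlinarith [mul_le_mul_of_nonneg_left hAs (le_of_lt hB)]
    exact le_of_mul_le_mul_left hmul hA
  · have hid : (A*B+c)*(2*(x0*A+s)*(x0*B+t) - (A*B - c)*(x0^2 - pp))
        = ((A*B+c)*x0 + (A*t+B*s))^2
          + (2*c*s*t + (A^2*B^2 - c^2)*pp - A^2*t^2 - B^2*s^2) := by ring
    have hf : 0 ≤ (A*B+c)*(2*(x0*A+s)*(x0*B+t) - (A*B - c)*(x0^2 - pp)) := by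
      rw [hid]; nlinarith [sq_nonneg ((A*B+c)*x0 + (A*t+B*s))]
    have := le_of_mul_le_mul_left (by linarith : (A*B+c)*0 ≤ (A*B+c)*(2*(x0*A+s)*(x0*B+t) - (A*B - c)*(x0^2 - pp))) h
    linarith


lemma gram {n : ℕ} (f g h : Fin n → ℝ) :
    (∑ i, f i ^2) * (∑ i, g i * h i)^2 + (∑ i, g i ^2) * (∑ i, f i * h i)^2
      - 2*(∑ i, f i * g i)*(∑ i, f i * h i)*(∑ i, g i * h i)
      + (∑ i, f i * g i)^2 * (∑ i, h i ^2)
    ≤ (∑ i, f i ^2) * (∑ i, g i ^2) * (∑ i, h i ^2) := by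
  set aa := ∑ i, f i ^2 with haa
  set bb := ∑ i, g i ^2 with hbb
  set pp := ∑ i, h i ^2 with hpp
  set c := ∑ i, f i * g i with hc
  set s := ∑ i, f i * h i with hs
  set t := ∑ i, g i * h i with ht
  have hppnn : 0 ≤ pp := Finset.sum_nonneg (fun i _ => sq_nonneg (h i))
  rcases eq_or_lt_of_le hppnn with h0 | h0
  · have hz : ∀ i, h i = 0 := by
      intro i
      have := (Finset.sum_eq_zero_iff_of_nonneg (fun i _ => sq_nonneg (h i))).mp h0.symm i (Finset.mem_univ i)
      exact pow_eq_zero_iff two_ne_zero |>.mp this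
    have hs0 : s = 0 := by rw [hs]; exact Finset.sum_eq_zero (fun i _ => by rw [hz]; ring)
    have ht0 : t = 0 := by rw [ht]; exact Finset.sum_eq_zero (fun i _ => by rw [hz]; ring)
    have hpp0 : pp = 0 := h0.symm
    rw [hs0, ht0, hpp0]; ring_nf
    exact le_refl _
  · have e1 : (∑ i, (pp * f i - s * h i) * (pp * g i - t * h i)) = pp^2*c - pp*s*t := by
      calc (∑ i, (pp * f i - s * h i) * (pp * g i - t * h i))
          = ∑ i, (pp^2*(f i * g i) - (pp*t)*(f i * h i) - (s*pp)*(g i * h i) + (s*t)*(h i ^2)) :=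
            Finset.sum_congr rfl (fun i _ => by ring)
        _ = pp^2*c - (pp*t)*s - (s*pp)*t + (s*t)*pp := by
            simp only [Finset.sum_add_distrib, Finset.sum_sub_distrib, ← Finset.mul_sum,
              ← hc, ← hs, ← ht, ← hpp]
        _ = pp^2*c - pp*s*t := by ring
    have e2 : (∑ i, (pp * f i - s * h i)^2) = pp^2*aa - pp*s^2 := by
      calc (∑ i, (pp * f i - s * h i)^2)
          = ∑ i, (pp^2*(f i ^2) - (2*pp*s)*(f i * h i) + (s^2)*(h i ^2)) :=
            Finset.sum_congr rfl (fun i _ => by ring)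
        _ = pp^2*aa - (2*pp*s)*s + (s^2)*pp := by
            simp only [Finset.sum_add_distrib, Finset.sum_sub_distrib, ← Finset.mul_sum,
              ← haa, ← hs, ← hpp]
        _ = pp^2*aa - pp*s^2 := by ring
    have e3 : (∑ i, (pp * g i - t * h i)^2) = pp^2*bb - pp*t^2 := by
      calc (∑ i, (pp * g i - t * h i)^2)
          = ∑ i, (pp^2*(g i ^2) - (2*pp*t)*(g i * h i) + (t^2)*(h i ^2)) :=
            Finset.sum_congr rfl (fun i _ => by ring)
        _ = pp^2*bb - (2*pp*t)*t + (t^2)*pp := by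
            simp only [Finset.sum_add_distrib, Finset.sum_sub_distrib, ← Finset.mul_sum,
              ← hbb, ← ht, ← hpp]
        _ = pp^2*bb - pp*t^2 := by ring
    have hcs' := Finset.sum_mul_sq_le_sq_mul_sq Finset.univ
      (fun i => pp * f i - s * h i) (fun i => pp * g i - t * h i)
    rw [e1, e2, e3] at hcs'
    have hkey : pp^3*(aa*t^2 + bb*s^2 - 2*c*s*t + c^2*pp) ≤ pp^3*(aa*bb*pp) := by nlinarith [hcs']
    have := le_of_mul_le_mul_left hkey (pow_pos h0 3)
    linarith

open Matrix in
theorem stmt_7 {n : ℕ} (v w : Fin (n + 1) → ℝ)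
    (hv : 0 ≤ mink v v) (hw : 0 ≤ mink w w)
    (hv0 : 0 < v 0) (hw0 : 0 < w 0) (hvw : 0 < mink v w) :
    (Matrix.vecMulVec v w + Matrix.vecMulVec w v - mink v w • minkMatrix n).PosSemidef := by
  refine Matrix.PosSemidef.of_dotProduct_mulVec_nonneg ?_ ?_
  · unfold Matrix.IsHermitian
    ext i j
    simp only [Matrix.conjTranspose_apply, Matrix.add_apply, Matrix.sub_apply, Matrix.smul_apply,
      Matrix.vecMulVec_apply, minkMatrix, Matrix.diagonal_apply, smul_eq_mul, star_trivial]
    by_cases hij : i = j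
    · subst hij; ring
    · rw [if_neg hij, if_neg (Ne.symm hij)]; ring
  · intro x
    have hstar : star x = x := rfl
    rw [hstar]
    have hvmv : ∀ (a b : Fin (n+1) → ℝ), x ⬝ᵥ (Matrix.vecMulVec a b *ᵥ x) = (x ⬝ᵥ a) * (b ⬝ᵥ x) := by
      intro a b
      simp only [Matrix.mulVec, Matrix.vecMulVec_apply, dotProduct]
      rw [Finset.sum_mul]
      refine Finset.sum_congr rfl fun i _ => ?_
      rw [Finset.mul_sum, Finset.mul_sum]
      exact Finset.sum_congr rfl fun j _ => by ring
    have heta : x ⬝ᵥ ((minkMatrix n) *ᵥ x) = x 0 * x 0 - ∑ i : Fin n, x i.succ * x i.succ := by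
      simp only [minkMatrix, Matrix.mulVec_diagonal, dotProduct]
      rw [Fin.sum_univ_succ]
      have : ∀ i : Fin n, x i.succ * ((if (i.succ : Fin (n+1)) = 0 then (1:ℝ) else -1) * x i.succ)
          = -(x i.succ * x i.succ) := fun i => by
        rw [if_neg (Fin.succ_ne_zero i)]; ring
      rw [Finset.sum_congr rfl (fun i _ => this i), Finset.sum_neg_distrib]
      norm_num
      exact (sub_eq_add_neg _ _).symm
    have hquad : x ⬝ᵥ ((Matrix.vecMulVec v w + Matrix.vecMulVec w v - mink v w • minkMatrix n) *ᵥ x)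
        = (x ⬝ᵥ v) * (w ⬝ᵥ x) + (x ⬝ᵥ w) * (v ⬝ᵥ x)
          - mink v w * (x 0 * x 0 - ∑ i : Fin n, x i.succ * x i.succ) := by
      rw [Matrix.sub_mulVec, Matrix.add_mulVec, dotProduct_sub, dotProduct_add,
        hvmv, hvmv, Matrix.smul_mulVec, dotProduct_smul, smul_eq_mul, heta]
    rw [hquad]
    have hdot : ∀ (a b : Fin (n+1) → ℝ), a ⬝ᵥ b = a 0 * b 0 + ∑ i : Fin n, a i.succ * b i.succ :=
      fun a b => by simp [dotProduct, Fin.sum_univ_succ]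
    have hcomm : ∀ (f g : Fin n → ℝ), (∑ i, f i * g i) = ∑ i, g i * f i :=
      fun f g => Finset.sum_congr rfl fun i _ => mul_comm _ _
    have hsq : ∀ (f : Fin n → ℝ), (∑ i, f i * f i) = ∑ i, f i ^ 2 :=
      fun f => Finset.sum_congr rfl fun i _ => (pow_two (f i)).symm
    rw [hdot x v, hdot w x, hdot x w, hdot v x]
    rw [show (∑ i : Fin n, w i.succ * x i.succ) = ∑ i : Fin n, x i.succ * w i.succ from
      hcomm (fun i => w i.succ) (fun i => x i.succ)]
    rw [show (∑ i : Fin n, v i.succ * x i.succ) = ∑ i : Fin n, x i.succ * v i.succ from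
      hcomm (fun i => v i.succ) (fun i => x i.succ)]
    rw [show (∑ i : Fin n, x i.succ * x i.succ) = ∑ i : Fin n, x i.succ ^ 2 from
      hsq (fun i => x i.succ)]
    unfold mink at hvw ⊢
    unfold mink at hv hw
    have haa : (∑ i : Fin n, v i.succ ^ 2) ≤ (v 0)^2 := by
      rw [← hsq (fun i => v i.succ)]; nlinarith [hv]
    have hbb : (∑ i : Fin n, w i.succ ^ 2) ≤ (w 0)^2 := by
      rw [← hsq (fun i => w i.succ)]; nlinarith [hw]
    have h0aa : (0:ℝ) ≤ ∑ i : Fin n, v i.succ ^ 2 := Finset.sum_nonneg fun i _ => sq_nonneg _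
    have h0bb : (0:ℝ) ≤ ∑ i : Fin n, w i.succ ^ 2 := Finset.sum_nonneg fun i _ => sq_nonneg _
    have h0pp : (0:ℝ) ≤ ∑ i : Fin n, x i.succ ^ 2 := Finset.sum_nonneg fun i _ => sq_nonneg _
    have hs : (∑ i : Fin n, x i.succ * v i.succ)^2
        ≤ (∑ i : Fin n, v i.succ ^ 2) * (∑ i : Fin n, x i.succ ^ 2) := by
      have := Finset.sum_mul_sq_le_sq_mul_sq (Finset.univ : Finset (Fin n)) (fun i => x i.succ) (fun i => v i.succ)
      nlinarith [this]
    have ht : (∑ i : Fin n, x i.succ * w i.succ)^2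
        ≤ (∑ i : Fin n, w i.succ ^ 2) * (∑ i : Fin n, x i.succ ^ 2) := by
      have := Finset.sum_mul_sq_le_sq_mul_sq (Finset.univ : Finset (Fin n)) (fun i => x i.succ) (fun i => w i.succ)
      nlinarith [this]
    have hcs : (∑ i : Fin n, v i.succ * w i.succ)^2
        ≤ (∑ i : Fin n, v i.succ ^ 2) * (∑ i : Fin n, w i.succ ^ 2) :=
      Finset.sum_mul_sq_le_sq_mul_sq (Finset.univ : Finset (Fin n)) (fun i => v i.succ) (fun i => w i.succ)
    have hgram := gram (fun i => v i.succ) (fun i => w i.succ) (fun i => x i.succ)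
    rw [show (∑ i : Fin n, v i.succ * x i.succ) = ∑ i : Fin n, x i.succ * v i.succ from
      hcomm (fun i => v i.succ) (fun i => x i.succ)] at hgram
    rw [show (∑ i : Fin n, w i.succ * x i.succ) = ∑ i : Fin n, x i.succ * w i.succ from
      hcomm (fun i => w i.succ) (fun i => x i.succ)] at hgram
    have hkey := key (v 0) (w 0) (∑ i : Fin n, v i.succ ^ 2) (∑ i : Fin n, w i.succ ^ 2)
      (∑ i : Fin n, v i.succ * w i.succ) (∑ i : Fin n, x i.succ ^ 2)
      (∑ i : Fin n, x i.succ * v i.succ) (∑ i : Fin n, x i.succ * w i.succ) (x 0)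
      hv0 hw0 haa hbb h0aa h0bb h0pp hs ht hcs hgram
    nlinarith [hkey]
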